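/- Let Φ denote the standard normal cdf, α = √((N−1)/(N−2)) with N ≥ 3, and β ∈ ℝ with |β| ≤ (1/2)/√((N−2)σ²) where σ² = 1/12. Then for all x ≤ 0 ≤ αx + β (i.e., the case y < 0 < x or x < 0 < y of the paper), |Φ(αx+β) − Φ(x)| ≤ 1/(2√(2π(N−2)σ²)). -/

import Mathlib

open MeasureTheory ProbabilityTheory Real

/-- The standard normal cumulative distribution function. -/
noncomputable def stdNormalCdf (x : ℝ) : ℝ :=
  ((gaussianReal 0 1) (Set.Iic x)).toReal

lemma stdNormalCdf_mono : Monotone stdNormalCdf := fun a b hab => by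
  have := measure_mono (μ := gaussianReal 0 1) (Set.Iic_subset_Iic.2 hab)
  exact ENNReal.toReal_mono (measure_ne_top _ _) this

lemma gaussianPDFReal_le (x : ℝ) :
    gaussianPDFReal 0 1 x ≤ (Real.sqrt (2 * π))⁻¹ := by
  unfold gaussianPDFReal
  simp only [NNReal.coe_one, mul_one, sub_zero]
  have h1 : Real.exp (-x ^ 2 / 2) ≤ 1 := by
    rw [Real.exp_le_one_iff]
    nlinarith [sq_nonneg x]
  have h2 : (0:ℝ) < Real.sqrt (2 * π) := Real.sqrt_pos.2 (by positivity)
  calc (Real.sqrt (2 * π))⁻¹ * Real.exp (-x ^ 2 / 2)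
      ≤ (Real.sqrt (2 * π))⁻¹ * 1 := by
        apply mul_le_mul_of_nonneg_left h1 (by positivity)
    _ = (Real.sqrt (2 * π))⁻¹ := mul_one _

lemma stdNormalCdf_lipschitz {a b : ℝ} (hab : a ≤ b) :
    stdNormalCdf b - stdNormalCdf a ≤ (b - a) * (Real.sqrt (2 * π))⁻¹ := by
  have hsplit : (gaussianReal 0 1) (Set.Iic b)
      = (gaussianReal 0 1) (Set.Iic a) + (gaussianReal 0 1) (Set.Ioc a b) := by
    rw [← measure_union (Set.Iic_disjoint_Ioc le_rfl) measurableSet_Ioc,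
      Set.Iic_union_Ioc_eq_Iic hab]
  have hIoc : ((gaussianReal 0 1) (Set.Ioc a b)).toReal ≤ (b - a) * (Real.sqrt (2 * π))⁻¹ := by
    rw [gaussianReal_apply_eq_integral 0 one_ne_zero, ENNReal.toReal_ofReal
      (integral_nonneg fun t => gaussianPDFReal_nonneg 0 1 t)]
    have : ∫ t in Set.Ioc a b, gaussianPDFReal 0 1 t
        ≤ ∫ _ in Set.Ioc a b, (Real.sqrt (2 * π))⁻¹ := by
      apply setIntegral_mono_on ((integrable_gaussianPDFReal 0 1).integrableOn)
        (integrableOn_const (by simp))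
        measurableSet_Ioc
      exact fun t _ => gaussianPDFReal_le t
    refine this.trans ?_
    rw [setIntegral_const]
    simp [Real.volume_Ioc, ENNReal.toReal_ofReal (sub_nonneg.2 hab), max_eq_left (sub_nonneg.2 hab)]
  have : stdNormalCdf b = stdNormalCdf a + ((gaussianReal 0 1) (Set.Ioc a b)).toReal := by
    unfold stdNormalCdf
    rw [hsplit, ENNReal.toReal_add (measure_ne_top _ _) (measure_ne_top _ _)]
  linarith

/-- Bound on the shift term `II(x)` in the case `x ≤ 0 ≤ αx + β`. -/
theorem stmt17 (N : ℕ) (hN : 3 ≤ N) (β x : ℝ)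
    (hβ : |β| ≤ (1 / 2) / Real.sqrt (((N : ℝ) - 2) * (1 / 12)))
    (hx : x ≤ 0) (hy : 0 ≤ Real.sqrt (((N : ℝ) - 1) / ((N : ℝ) - 2)) * x + β) :
    |stdNormalCdf (Real.sqrt (((N : ℝ) - 1) / ((N : ℝ) - 2)) * x + β) - stdNormalCdf x|
      ≤ 1 / (2 * Real.sqrt (2 * π * ((N : ℝ) - 2) * (1 / 12))) := by
  have hN3 : (3:ℝ) ≤ (N:ℝ) := by exact_mod_cast hN
  set α := Real.sqrt (((N : ℝ) - 1) / ((N : ℝ) - 2)) with hα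
  have hα1 : 1 ≤ α := by
    have h1 : (1:ℝ) ≤ ((N:ℝ) - 1) / ((N:ℝ) - 2) := by
      rw [le_div_iff₀ (by linarith)]; linarith
    calc (1:ℝ) = Real.sqrt 1 := Real.sqrt_one.symm
      _ ≤ α := Real.sqrt_le_sqrt h1
  have hax : α * x ≤ x := by
    nlinarith
  have hxy : x ≤ α * x + β := le_trans hx hy
  have habs : |stdNormalCdf (α * x + β) - stdNormalCdf x|
      = stdNormalCdf (α * x + β) - stdNormalCdf x :=
    abs_of_nonneg (sub_nonneg.2 (stdNormalCdf_mono hxy))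
  rw [habs]
  have hmono : stdNormalCdf x ≥ stdNormalCdf (α * x) := stdNormalCdf_mono hax
  have hlip : stdNormalCdf (α * x + β) - stdNormalCdf (α * x)
      ≤ (α * x + β - α * x) * (Real.sqrt (2 * π))⁻¹ :=
    stdNormalCdf_lipschitz (by nlinarith)
  have hβ' : β ≤ (1 / 2) / Real.sqrt (((N : ℝ) - 2) * (1 / 12)) :=
    (le_abs_self β).trans hβ
  have hc : (0:ℝ) < ((N : ℝ) - 2) * (1 / 12) := by nlinarith
  have hsc : (0:ℝ) < Real.sqrt (((N : ℝ) - 2) * (1 / 12)) := Real.sqrt_pos.2 hc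
  have hs2π : (0:ℝ) < Real.sqrt (2 * π) := Real.sqrt_pos.2 (by positivity)
  have hsplit : Real.sqrt (2 * π * ((N : ℝ) - 2) * (1 / 12))
      = Real.sqrt (2 * π) * Real.sqrt (((N : ℝ) - 2) * (1 / 12)) := by
    rw [← Real.sqrt_mul (by positivity), mul_assoc]
  have key : (α * x + β - α * x) * (Real.sqrt (2 * π))⁻¹
      ≤ 1 / (2 * Real.sqrt (2 * π * ((N : ℝ) - 2) * (1 / 12))) := by
    have hsimp : α * x + β - α * x = β := by ring
    rw [hsimp, hsplit]
    have hb2 : β ≤ 1 / (2 * Real.sqrt (((N : ℝ) - 2) * (1 / 12))) := by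
      rw [show (1:ℝ) / (2 * Real.sqrt (((N : ℝ) - 2) * (1 / 12)))
          = (1 / 2) / Real.sqrt (((N : ℝ) - 2) * (1 / 12)) by field_simp]
      exact hβ'
    calc β * (Real.sqrt (2 * π))⁻¹
        ≤ (1 / (2 * Real.sqrt (((N : ℝ) - 2) * (1 / 12)))) * (Real.sqrt (2 * π))⁻¹ :=
          mul_le_mul_of_nonneg_right hb2 (by positivity)
      _ = 1 / (2 * (Real.sqrt (2 * π) * Real.sqrt (((N : ℝ) - 2) * (1 / 12)))) := by
          field_simp
  linarith
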